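/- Suppose that for every ε > 0, P(sup_{0<u<t} X_u/h(u) ≥ σ_0 sqrt(1+ε)) = exp(−ε(log log(1/t))(1+o(1))) as t → 0, and that sup_{0<u<t} X_u/h(u) ≥ σ_0 almost surely for all small t. Then for any nonempty open set O ⊆ ℝ, liminf_{t→0} (log log(1/t))^{-1} log P(sup_{0<u<t} X_u/h(u) ∈ O) ≥ −inf_{x∈O} J(x), where J(x) = (x/σ_0)² − 1 for x ≥ σ_0 and ∞ otherwise. -/

import Mathlib

open MeasureTheory Filter Real Set
open scoped Topology ENNReal

/-- Abstract LDP lower bound: if `P(Y_t ≥ σ₀√(1+ε)) = exp(−ε(log log(1/t))(1+o(1)))` for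
every `ε > 0` and `Y_t ≥ σ₀` a.s. for small `t`, then for every nonempty open `O ⊆ ℝ`,
`liminf_{t→0} (log log(1/t))⁻¹ log P(Y_t ∈ O) ≥ −inf_O J`, where `J(x) = (x/σ₀)² − 1`
for `x ≥ σ₀` and `J = ∞` otherwise. -/
theorem ldp_lower_bound_from_tails {Ω : Type*} [MeasurableSpace Ω] (P : Measure Ω)
    [IsProbabilityMeasure P] (σ₀ : ℝ) (hpos : 0 < σ₀) (Y : ℝ → Ω → ℝ)
    (htail : ∀ ε > (0 : ℝ), ∃ e : ℝ → ℝ, Tendsto e (𝓝[>] (0 : ℝ)) (𝓝 0) ∧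
      ∀ᶠ t in 𝓝[>] (0 : ℝ),
        P {ω | σ₀ * Real.sqrt (1 + ε) ≤ Y t ω}
          = ENNReal.ofReal (Real.exp (-ε * Real.log (Real.log (1 / t)) * (1 + e t))))
    (hge : ∀ᶠ t in 𝓝[>] (0 : ℝ), ∀ᵐ ω ∂P, σ₀ ≤ Y t ω)
    (O : Set ℝ) (hO : IsOpen O) (hne : O.Nonempty) :
    -(⨅ x ∈ O, (if σ₀ ≤ x then (((x / σ₀) ^ 2 - 1 : ℝ) : EReal) else ⊤))
      ≤ Filter.liminf (fun t =>
          ((Real.log (Real.log (1 / t)))⁻¹ : ℝ) * ENNReal.log (P {ω | Y t ω ∈ O}))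
        (𝓝[>] (0 : ℝ)) := by
  classical
  set L : ℝ → ℝ := fun t => Real.log (Real.log (1 / t)) with hLdef
  set f : ℝ → EReal := fun t =>
      ((Real.log (Real.log (1 / t)))⁻¹ : ℝ) * ENNReal.log (P {ω | Y t ω ∈ O}) with hfdef
  -- `L t → ∞` as `t → 0⁺`
  have hLtop : Tendsto L (𝓝[>] (0 : ℝ)) atTop := by
    have h1 : Tendsto (fun t : ℝ => 1 / t) (𝓝[>] (0 : ℝ)) atTop := by
      simpa [one_div] using (tendsto_inv_nhdsGT_zero (𝕜 := ℝ))
    exact Real.tendsto_log_atTop.comp (Real.tendsto_log_atTop.comp h1)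
  -- extended tail estimate, valid also at `ε = 0`
  have htail' : ∀ ε : ℝ, 0 ≤ ε → ∃ e : ℝ → ℝ, Tendsto e (𝓝[>] (0 : ℝ)) (𝓝 0) ∧
      ∀ᶠ t in 𝓝[>] (0 : ℝ),
        P {ω | σ₀ * Real.sqrt (1 + ε) ≤ Y t ω}
          = ENNReal.ofReal (Real.exp (-ε * L t * (1 + e t))) := by
    intro ε hε
    rcases hε.eq_or_lt with h | h
    · refine ⟨fun _ => 0, tendsto_const_nhds, ?_⟩
      filter_upwards [hge] with t ht
      have h0 : (-ε * L t * (1 + 0) : ℝ) = 0 := by rw [← h]; ring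
      have hset : {ω | σ₀ * Real.sqrt (1 + ε) ≤ Y t ω} = {ω | σ₀ ≤ Y t ω} := by
        rw [← h]; simp
      rw [hset, h0, Real.exp_zero, ENNReal.ofReal_one]
      -- the set has full measure
      have hc : P ({ω | σ₀ ≤ Y t ω}ᶜ) = 0 := ht
      have h1 : (1 : ℝ≥0∞) = P Set.univ := (measure_univ).symm
      have h2 : P Set.univ ≤ P {ω | σ₀ ≤ Y t ω} + P ({ω | σ₀ ≤ Y t ω}ᶜ) := by
        rw [← Set.union_compl_self {ω | σ₀ ≤ Y t ω}]
        exact measure_union_le _ _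
      have h3 : (1 : ℝ≥0∞) ≤ P {ω | σ₀ ≤ Y t ω} := by
        rw [h1]; simpa [hc] using h2
      exact le_antisymm prob_le_one h3
    · exact htail ε h
  -- key step: a lower bound from a window `[σ₀√(1+ε₁), σ₀√(1+ε₂)) ⊆ O`
  have key : ∀ ε₁ ε₂ : ℝ, 0 ≤ ε₁ → ε₁ < ε₂ →
      Set.Ico (σ₀ * Real.sqrt (1 + ε₁)) (σ₀ * Real.sqrt (1 + ε₂)) ⊆ O →
      ((-ε₁ : ℝ) : EReal) ≤ Filter.liminf f (𝓝[>] (0 : ℝ)) := by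
    intro ε₁ ε₂ hε₁ h12 hsub
    obtain ⟨e₁, he₁, hq₁⟩ := htail' ε₁ hε₁
    obtain ⟨e₂, he₂, hq₂⟩ := htail' ε₂ (hε₁.trans h12.le)
    set c : ℝ := (ε₂ - ε₁) / 2 with hcdef
    have hc : 0 < c := by rw [hcdef]; linarith
    -- eventually the perturbation is small
    have hd : Tendsto (fun t => ε₂ * e₂ t - ε₁ * e₁ t) (𝓝[>] (0 : ℝ)) (𝓝 0) := by
      have := ((he₂.const_mul ε₂).sub (he₁.const_mul ε₁))
      simpa using this
    have hdev : ∀ᶠ t in 𝓝[>] (0 : ℝ), |ε₂ * e₂ t - ε₁ * e₁ t| < c := by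
      have := Metric.tendsto_nhds.mp hd c hc
      simpa [Real.dist_eq] using this
    have hLbig : ∀ᶠ t in 𝓝[>] (0 : ℝ), Real.log 2 / c ≤ L t :=
      hLtop.eventually_ge_atTop _
    have hLpos : ∀ᶠ t in 𝓝[>] (0 : ℝ), 0 < L t := hLtop.eventually_gt_atTop 0
    -- auxiliary real lower bound function
    set g : ℝ → ℝ := fun t => (L t)⁻¹ * Real.log (Real.exp (-ε₁ * L t * (1 + e₁ t)) / 2)
      with hgdef
    have hev : ∀ᶠ t in 𝓝[>] (0 : ℝ), ((g t : ℝ) : EReal) ≤ f t := by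
      filter_upwards [hq₁, hq₂, hdev, hLbig, hLpos] with t ht₁ ht₂ htd htL htLpos
      set a₁ : ℝ := Real.exp (-ε₁ * L t * (1 + e₁ t)) with ha₁
      set a₂ : ℝ := Real.exp (-ε₂ * L t * (1 + e₂ t)) with ha₂
      have ha₁pos : 0 < a₁ := Real.exp_pos _
      -- `a₂ ≤ a₁ / 2`
      have hexp : -ε₂ * L t * (1 + e₂ t) ≤ -ε₁ * L t * (1 + e₁ t) - Real.log 2 := by
        have h1 : ε₂ * (1 + e₂ t) - ε₁ * (1 + e₁ t) ≥ c := by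
          have : ε₂ * (1 + e₂ t) - ε₁ * (1 + e₁ t)
              = (ε₂ - ε₁) + (ε₂ * e₂ t - ε₁ * e₁ t) := by ring
          rw [this]
          have := neg_le_of_abs_le htd.le
          linarith [htd, abs_le.mp htd.le]
        have h2 : Real.log 2 ≤ L t * c := by
          rw [div_le_iff₀ hc] at htL
          linarith [htL]
        have h3 : L t * c ≤ L t * (ε₂ * (1 + e₂ t) - ε₁ * (1 + e₁ t)) :=
          mul_le_mul_of_nonneg_left h1 htLpos.le
        nlinarith [h2, h3]
      have ha₂le : a₂ ≤ a₁ / 2 := by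
        have : a₂ ≤ Real.exp (-ε₁ * L t * (1 + e₁ t) - Real.log 2) :=
          Real.exp_le_exp.mpr hexp
        rwa [Real.exp_sub, Real.exp_log two_pos, ← ha₁] at this
      -- measure lower bound
      set A : Set Ω := {ω | σ₀ * Real.sqrt (1 + ε₁) ≤ Y t ω} with hA
      set B : Set Ω := {ω | σ₀ * Real.sqrt (1 + ε₂) ≤ Y t ω} with hB
      have hABO : A \ B ⊆ {ω | Y t ω ∈ O} := by
        intro ω hω
        exact hsub ⟨hω.1, lt_of_not_ge hω.2⟩
      have hm1 : P A ≤ P {ω | Y t ω ∈ O} + P B := by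
        calc P A ≤ P (A \ B ∪ B) := measure_mono (Set.subset_diff_union A B)
          _ ≤ P (A \ B) + P B := measure_union_le _ _
          _ ≤ P {ω | Y t ω ∈ O} + P B := add_le_add_left (measure_mono hABO) _
      have hm2 : P A - P B ≤ P {ω | Y t ω ∈ O} := tsub_le_iff_right.mpr hm1
      have hm3 : ENNReal.ofReal (a₁ / 2) ≤ P {ω | Y t ω ∈ O} := by
        have : P A - P B = ENNReal.ofReal (a₁ - a₂) := by
          rw [ht₁, ht₂, ← ENNReal.ofReal_sub _ (Real.exp_pos _).le]
        rw [this] at hm2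
        exact le_trans (ENNReal.ofReal_le_ofReal (by linarith)) hm2
      -- convert to real logarithms
      have hPpos : 0 < (P {ω | Y t ω ∈ O}).toReal := by
        have hne' : P {ω | Y t ω ∈ O} ≠ 0 := by
          intro h0
          rw [h0, le_zero_iff, ENNReal.ofReal_eq_zero] at hm3
          linarith
        have hnetop : P {ω | Y t ω ∈ O} ≠ ⊤ := measure_ne_top P _
        exact ENNReal.toReal_pos hne' hnetop
      have hlog : ENNReal.log (P {ω | Y t ω ∈ O})
          = ((Real.log ((P {ω | Y t ω ∈ O}).toReal) : ℝ) : EReal) :=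
        ENNReal.log_pos_real' hPpos
      have hf : f t = (((L t)⁻¹ * Real.log ((P {ω | Y t ω ∈ O}).toReal) : ℝ) : EReal) := by
        show ((Real.log (Real.log (1 / t)))⁻¹ : ℝ) * ENNReal.log (P {ω | Y t ω ∈ O}) = _
        rw [hlog, ← EReal.coe_mul]
      rw [hf]
      refine EReal.coe_le_coe_iff.mpr ?_
      refine mul_le_mul_of_nonneg_left ?_ (by positivity)
      refine Real.log_le_log (by positivity) ?_
      have := ENNReal.toReal_mono (measure_ne_top P _) hm3
      rwa [ENNReal.toReal_ofReal (by positivity)] at this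
    -- `g → -ε₁`
    have hg_tendsto : Tendsto g (𝓝[>] (0 : ℝ)) (𝓝 (-ε₁)) := by
      have heq : ∀ᶠ t in 𝓝[>] (0 : ℝ),
          (-ε₁) * (1 + e₁ t) - (L t)⁻¹ * Real.log 2 = g t := by
        filter_upwards [hLpos] with t htL
        rw [hgdef]
        simp only
        rw [Real.log_div (Real.exp_ne_zero _) two_ne_zero, Real.log_exp]
        field_simp
      have hlim : Tendsto (fun t => (-ε₁) * (1 + e₁ t) - (L t)⁻¹ * Real.log 2)
          (𝓝[>] (0 : ℝ)) (𝓝 (-ε₁)) := by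
        have h1 : Tendsto (fun t => (-ε₁) * (1 + e₁ t)) (𝓝[>] (0 : ℝ)) (𝓝 ((-ε₁) * (1 + 0))) :=
          (tendsto_const_nhds.add he₁).const_mul _
        have h2 : Tendsto (fun t => (L t)⁻¹ * Real.log 2) (𝓝[>] (0 : ℝ)) (𝓝 (0 * Real.log 2)) :=
          hLtop.inv_tendsto_atTop.mul_const _
        simpa using h1.sub h2
      exact Tendsto.congr' heq hlim
    have hg_tendsto' : Tendsto (fun t => ((g t : ℝ) : EReal)) (𝓝[>] (0 : ℝ))
        (𝓝 (((-ε₁ : ℝ) : EReal))) := by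
      exact (EReal.tendsto_coe).mpr hg_tendsto
    calc ((-ε₁ : ℝ) : EReal) = Filter.liminf (fun t => ((g t : ℝ) : EReal)) (𝓝[>] (0 : ℝ)) :=
          (hg_tendsto'.liminf_eq).symm
      _ ≤ Filter.liminf f (𝓝[>] (0 : ℝ)) := liminf_le_liminf hev
  -- reduce the goal to individual points of `O`
  rw [EReal.neg_le]
  refine le_iInf fun x => le_iInf fun hx => ?_
  split_ifs with hσx
  · -- case `σ₀ ≤ x`
    rw [← EReal.neg_le, ← EReal.coe_neg]
    set ε₀ : ℝ := (x / σ₀) ^ 2 - 1 with hε₀def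
    have hε₀ : 0 ≤ ε₀ := by
      have h1 : (1 : ℝ) ≤ x / σ₀ := (le_div_iff₀ hpos).mpr (by linarith)
      rw [hε₀def]; nlinarith
    -- an interval around `x` inside `O`
    obtain ⟨δ, hδ, hball⟩ := Metric.isOpen_iff.mp hO x hx
    -- continuity of `ε ↦ σ₀ √(1+ε)` at `ε₀`
    have hcont : ContinuousAt (fun ε : ℝ => σ₀ * Real.sqrt (1 + ε)) ε₀ := by
      exact (continuousAt_const.mul ((Real.continuous_sqrt.continuousAt).comp
        (continuousAt_const.add continuousAt_id)))
    have hval : σ₀ * Real.sqrt (1 + ε₀) = x := by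
      rw [hε₀def]
      have : (1 : ℝ) + ((x / σ₀) ^ 2 - 1) = (x / σ₀) ^ 2 := by ring
      rw [this, Real.sqrt_sq (le_of_lt (div_pos (by linarith) hpos))]
      field_simp
    have hmem : ∀ᶠ ε in 𝓝 ε₀, σ₀ * Real.sqrt (1 + ε) ∈ Metric.ball x δ := by
      have : Metric.ball x δ ∈ 𝓝 (σ₀ * Real.sqrt (1 + ε₀)) := by
        rw [hval]; exact Metric.ball_mem_nhds x hδ
      exact hcont.tendsto this
    obtain ⟨r, hr, hrmem⟩ := Metric.eventually_nhds_iff_ball.mp hmem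
    set ε₁ : ℝ := ε₀ - min (r / 2) ε₀ with hε₁def
    set ε₂ : ℝ := ε₀ + r / 2 with hε₂def
    have hε₁nonneg : 0 ≤ ε₁ := by
      rw [hε₁def]
      have := min_le_right (r / 2) ε₀
      linarith
    have hε₁le : ε₁ ≤ ε₀ := by
      rw [hε₁def]
      have : 0 ≤ min (r / 2) ε₀ := le_min (by linarith) hε₀
      linarith
    have h12 : ε₁ < ε₂ := by
      have : 0 ≤ min (r / 2) ε₀ := le_min (by linarith) hε₀
      have h1 : min (r / 2) ε₀ ≤ r / 2 := min_le_left _ _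
      rw [hε₁def, hε₂def]; linarith
    have hm0 : 0 ≤ min (r / 2) ε₀ := le_min (by linarith) hε₀
    have hm1 : min (r / 2) ε₀ ≤ r / 2 := min_le_left _ _
    have hmem₁ : σ₀ * Real.sqrt (1 + ε₁) ∈ Metric.ball x δ := by
      refine hrmem ε₁ ?_
      rw [Metric.mem_ball, Real.dist_eq, hε₁def, abs_lt]
      constructor <;> linarith
    have hmem₂ : σ₀ * Real.sqrt (1 + ε₂) ∈ Metric.ball x δ := by
      refine hrmem ε₂ ?_
      rw [Metric.mem_ball, Real.dist_eq, hε₂def, abs_lt]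
      constructor <;> linarith
    have hIco : Set.Ico (σ₀ * Real.sqrt (1 + ε₁)) (σ₀ * Real.sqrt (1 + ε₂)) ⊆ O := by
      intro y hy
      refine hball ?_
      rw [Metric.mem_ball, Real.dist_eq, abs_lt]
      rw [Metric.mem_ball, Real.dist_eq, abs_lt] at hmem₁ hmem₂
      constructor
      · linarith [hy.1, hmem₁.1]
      · linarith [hy.2, hmem₂.2]
    have hkey := key ε₁ ε₂ hε₁nonneg h12 hIco
    refine le_trans ?_ hkey
    exact EReal.coe_le_coe_iff.mpr (by linarith)
  · exact le_top
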